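/- arXiv:2107.00991 — 2 statements merged into one kernel-verified Lean document; each statement's English description precedes it below -/
import Mathlib

section
/- For every n ≥ 0 there exists a surjective kG-module homomorphism from the free module (kG)^{n+1} onto V_{2n+1} whose kernel is isomorphic as a kG-module to V_{2n+3}. -/
/-- The Klein four-group `G = C₂ × C₂`. -/
abbrev K4 : Type := Multiplicative (ZMod 2 × ZMod 2)

/-- The generator `σ` of the Klein four-group. -/
def sg : K4 := Multiplicative.ofAdd ((1 : ZMod 2), (0 : ZMod 2))

/-- The generator `τ` of the Klein four-group. -/
def tg : K4 := Multiplicative.ofAdd ((0 : ZMod 2), (1 : ZMod 2))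

/-- The subgroup `H₁ = ⟨σ⟩`. -/
def H1 : Subgroup K4 := Subgroup.zpowers sg

/-- The subgroup `H₂ = ⟨τ⟩`. -/
def H2 : Subgroup K4 := Subgroup.zpowers tg

/-- The subgroup `H₃ = ⟨στ⟩`. -/
def H3 : Subgroup K4 := Subgroup.zpowers (sg * tg)

/-- `V` carries the structure of the module `V_{2n+1}`: the basis vector `B (Sum.inl j)`
is `a_j` (for `0 ≤ j ≤ n`) and `B (Sum.inr i)` is `b_{i+1}` (for `0 ≤ i ≤ n-1`), with
`X·aᵢ = bᵢ` (`1 ≤ i ≤ n`), `Y·aᵢ = b_{i+1}` (`0 ≤ i ≤ n-1`), `X·a₀ = Y·aₙ = 0` and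
`X·bⱼ = Y·bⱼ = 0`, i.e. (with `σ = 1 + X`, `τ = 1 + Y`) `σ·aᵢ = aᵢ + bᵢ` for `i ≥ 1`,
`σ·a₀ = a₀`, `τ·aᵢ = aᵢ + b_{i+1}` for `i ≤ n-1`, `τ·aₙ = aₙ`, and `σ, τ` fix the `bⱼ`. -/
def IsVpos (k : Type) [Field k] (n : ℕ) (V : Type) [AddCommGroup V] [Module k V]
    [DistribMulAction K4 V] (B : Module.Basis (Fin (n + 1) ⊕ Fin n) k V) : Prop :=
  (sg • B (Sum.inl 0) = B (Sum.inl 0)) ∧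
  (∀ i : Fin n, sg • B (Sum.inl i.succ) = B (Sum.inl i.succ) + B (Sum.inr i)) ∧
  (∀ i : Fin n, tg • B (Sum.inl i.castSucc) = B (Sum.inl i.castSucc) + B (Sum.inr i)) ∧
  (tg • B (Sum.inl (Fin.last n)) = B (Sum.inl (Fin.last n))) ∧
  (∀ j : Fin n, sg • B (Sum.inr j) = B (Sum.inr j)) ∧
  (∀ j : Fin n, tg • B (Sum.inr j) = B (Sum.inr j))

lemma sum_K4 {α : Type*} [AddCommMonoid α] (f : K4 → α) :
    ∑ g : K4, f g = f 1 + f sg + f tg + f (sg*tg) := by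
  rw [show (Finset.univ : Finset K4) = {1, sg, tg, sg*tg} from by decide]
  rw [Finset.sum_insert (by decide), Finset.sum_insert (by decide),
    Finset.sum_insert (by decide), Finset.sum_singleton]
  abel

section aux
variable (k : Type) [Field k]

/-- the function corresponding to X = σ - 1 (char 2) in kG -/
def Xf : K4 → k := fun x => if x = sg ∨ x = 1 then 1 else 0
/-- Y = τ - 1 -/
def Yf : K4 → k := fun x => if x = tg ∨ x = 1 then 1 else 0

lemma K4cases (x : K4) : x = 1 ∨ x = sg ∨ x = tg ∨ x = sg*tg := by revert x; decide

@[simp] lemma Xf_one : Xf k 1 = 1 := if_pos (Or.inr rfl)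
@[simp] lemma Xf_sg : Xf k sg = 1 := if_pos (Or.inl rfl)
@[simp] lemma Xf_tg : Xf k tg = 0 := if_neg (by decide)
@[simp] lemma Xf_st : Xf k (sg*tg) = 0 := if_neg (by decide)
@[simp] lemma Yf_one : Yf k 1 = 1 := if_pos (Or.inr rfl)
@[simp] lemma Yf_sg : Yf k sg = 0 := if_neg (by decide)
@[simp] lemma Yf_tg : Yf k tg = 1 := if_pos (Or.inl rfl)
@[simp] lemma Yf_st : Yf k (sg*tg) = 0 := if_neg (by decide)

variable [CharP k 2]

lemma Xf_mul_sg (x : K4) : Xf k (sg * x) = Xf k x := by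
  rcases K4cases x with rfl|rfl|rfl|rfl <;>
    simp (config := { decide := true }) [Xf, CharTwo.add_self_eq_zero]

lemma Yf_mul_sg (x : K4) : Yf k (sg * x) = Yf k x + 1 := by
  rcases K4cases x with rfl|rfl|rfl|rfl <;>
    simp (config := { decide := true }) [Yf, CharTwo.add_self_eq_zero]

lemma Xf_mul_tg (x : K4) : Xf k (tg * x) = Xf k x + 1 := by
  rcases K4cases x with rfl|rfl|rfl|rfl <;>
    simp (config := { decide := true }) [Xf, CharTwo.add_self_eq_zero]

lemma Yf_mul_tg (x : K4) : Yf k (tg * x) = Yf k x := by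
  rcases K4cases x with rfl|rfl|rfl|rfl <;>
    simp (config := { decide := true }) [Yf, CharTwo.add_self_eq_zero]

variable (n : ℕ)

def valsF : Fin (n+2) ⊕ Fin (n+1) → (Fin (n+1) → K4 → k)
  | Sum.inl j => fun i x =>
      (if (i:ℕ)+1 = (j:ℕ) then Yf k x else 0) + (if (i:ℕ) = (j:ℕ) then Xf k x else 0)
  | Sum.inr j => fun i x => if (i:ℕ) = (j:ℕ) then 1 else 0

variable (V : Type) [AddCommGroup V] [Module k V] [DistribMulAction K4 V] [SMulCommClass K4 k V]
  (BV : Module.Basis (Fin (n+1) ⊕ Fin n) k V)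

noncomputable def piM : (Fin (n+1) → K4 → k) →ₗ[k] V where
  toFun F := ∑ i : Fin (n+1), ∑ g : K4, F i g • g • BV (Sum.inl i)
  map_add' F G := by simp [add_smul, Finset.sum_add_distrib]
  map_smul' c F := by
    simp only [Pi.smul_apply, smul_eq_mul, mul_smul, ← Finset.smul_sum, RingHom.id_apply]

/-- the "A" vectors indexed by naturals, 0 beyond range -/
noncomputable def Av : ℕ → V := fun m => if h : m < n+1 then BV (Sum.inl ⟨m, h⟩) else 0
/-- b_{m+1} vectors, 0 beyond range -/
noncomputable def Bv : ℕ → V := fun m => if h : m < n then BV (Sum.inr ⟨m, h⟩) else 0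

lemma piM_sing (m : ℕ) (f : K4 → k) :
    piM k n V BV (fun i x => if (i:ℕ) = m then f x else 0)
      = ∑ g : K4, f g • g • Av k n V BV m := by
  have key : ∀ i : Fin (n+1),
      (∑ g : K4, (if (i:ℕ) = m then f g else 0) • g • BV (Sum.inl i))
        = if (i:ℕ) = m then ∑ g : K4, f g • g • Av k n V BV (i:ℕ) else 0 := by
    intro i
    by_cases h : (i:ℕ) = m
    · subst h; simp [Av, i.isLt]
    · simp [h]
  show (∑ i : Fin (n+1), ∑ g : K4, _) = _
  rw [Finset.sum_congr rfl (fun i _ => key i)]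
  rw [Fin.sum_univ_eq_sum_range (fun m' => if m' = m then ∑ g : K4, f g • g • Av k n V BV m' else 0)]
  rw [Finset.sum_ite_eq' (Finset.range (n+1)) m]
  by_cases h : m < n + 1
  · simp [h]
  · simp [h, Av]


lemma piM_equiv (g : K4) (F : Fin (n+1) → K4 → k) :
    piM k n V BV (fun i x => F i (g⁻¹ * x)) = g • piM k n V BV F := by
  show (∑ i : Fin (n+1), ∑ h : K4, F i (g⁻¹ * h) • h • BV (Sum.inl i)) = _
  have key : ∀ i : Fin (n+1), (∑ h : K4, F i (g⁻¹ * h) • h • BV (Sum.inl i))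
      = g • ∑ h : K4, F i h • h • BV (Sum.inl i) := by
    intro i
    rw [Finset.smul_sum]
    refine (Fintype.sum_equiv (Equiv.mulLeft g)
      (fun h => g • (F i h • h • BV (Sum.inl i)))
      (fun h => F i (g⁻¹ * h) • h • BV (Sum.inl i)) ?_).symm
    intro h
    simp [inv_mul_cancel_left, mul_smul, smul_comm g (F i h)]
  rw [Finset.sum_congr rfl (fun i _ => key i), ← Finset.smul_sum]
  rfl

noncomputable def singElem (i₀ : Fin (n+1)) (g₀ : K4) : Fin (n+1) → K4 → k :=
  fun i x => if (i:ℕ) = (i₀:ℕ) then (if x = g₀ then (1:k) else 0) else 0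

lemma piM_singElem (i₀ : Fin (n+1)) (g₀ : K4) :
    piM k n V BV (singElem k n i₀ g₀) = g₀ • BV (Sum.inl i₀) := by
  have h := piM_sing k n V BV (i₀:ℕ) (fun x => if x = g₀ then (1:k) else 0)
  unfold singElem
  rw [h]
  simp [ite_smul, Finset.sum_ite_eq', Av, i₀.isLt]

lemma piM_surj (hV : IsVpos k n V BV) : Function.Surjective (piM k n V BV) := by
  rw [← LinearMap.range_eq_top, eq_top_iff, ← BV.span_eq, Submodule.span_le]
  rintro v ⟨s, rfl⟩
  cases s with
  | inl i => exact ⟨singElem k n i 1, by rw [piM_singElem]; simp⟩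
  | inr j =>
    have h1 : BV (Sum.inl j.succ) ∈ LinearMap.range (piM k n V BV) :=
      ⟨singElem k n j.succ 1, by rw [piM_singElem]; simp⟩
    have h2 : sg • BV (Sum.inl j.succ) ∈ LinearMap.range (piM k n V BV) :=
      ⟨singElem k n j.succ sg, piM_singElem k n V BV j.succ sg⟩
    have hb : BV (Sum.inr j) = sg • BV (Sum.inl j.succ) - BV (Sum.inl j.succ) := by
      rw [hV.2.1 j]; abel
    exact hb ▸ sub_mem h2 h1


lemma sum_Xf_smul (v : V) : ∑ g : K4, Xf k g • g • v = v + sg • v := by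
  rw [sum_K4]; simp

lemma sum_Yf_smul (v : V) : ∑ g : K4, Yf k g • g • v = v + tg • v := by
  rw [sum_K4]; simp [add_comm]

section rel
variable (hV : IsVpos k n V BV)
include hV

lemma hAv_tg : ∀ m : ℕ, tg • Av k n V BV m = Av k n V BV m + Bv k n V BV m := by
  intro m
  unfold Av Bv
  rcases lt_trichotomy m n with h | rfl | h
  · rw [dif_pos (by omega : m < n + 1), dif_pos h]
    have := hV.2.2.1 ⟨m, h⟩
    rwa [Fin.castSucc_mk] at this
  · rw [dif_pos (by omega : m < m + 1), dif_neg (by omega)]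
    have := hV.2.2.2.1
    rw [show Fin.last m = ⟨m, by omega⟩ from rfl] at this
    rw [this, add_zero]
  · rw [dif_neg (by omega), dif_neg (by omega)]
    simp

lemma hAv_sg : ∀ m : ℕ, sg • Av k n V BV (m+1) = Av k n V BV (m+1) + Bv k n V BV m := by
  intro m
  unfold Av Bv
  by_cases h : m < n
  · rw [dif_pos (by omega : m + 1 < n + 1), dif_pos h]
    have := hV.2.1 ⟨m, h⟩
    rwa [Fin.succ_mk] at this
  · rw [dif_neg (by omega), dif_neg (by omega)]
    simp

lemma hAv_sg0 : sg • Av k n V BV 0 = Av k n V BV 0 := by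
  unfold Av
  rw [dif_pos (by omega : 0 < n + 1)]
  exact hV.1

lemma hBv_sg : ∀ m : ℕ, sg • Bv k n V BV m = Bv k n V BV m := by
  intro m
  unfold Bv
  by_cases h : m < n
  · rw [dif_pos h]; exact hV.2.2.2.2.1 ⟨m, h⟩
  · rw [dif_neg h]; simp

lemma piM_valsF (s : Fin (n+2) ⊕ Fin (n+1)) :
    piM k n V BV (valsF k n s) = 0 := by
  have h2 : ∀ v : V, v + v = 0 := fun v => by
    rw [← two_smul k v, CharTwo.two_eq_zero, zero_smul]
  cases s with
  | inl j =>
    obtain ⟨jv, hj⟩ := j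
    rw [show valsF k n (Sum.inl ⟨jv, hj⟩)
        = (fun (i : Fin (n+1)) (x : K4) => if (i:ℕ)+1 = jv then Yf k x else 0)
          + (fun (i : Fin (n+1)) (x : K4) => if (i:ℕ) = jv then Xf k x else 0) from rfl, map_add]
    cases jv with
    | zero =>
      rw [show (fun (i : Fin (n+1)) (x : K4) => if (i:ℕ)+1 = 0 then Yf k x else 0) = 0 from by
        funext i x; simp]
      rw [map_zero, zero_add, piM_sing, sum_Xf_smul, hAv_sg0 k n V BV hV, h2]
    | succ m =>
      rw [show (fun (i : Fin (n+1)) (x : K4) => if (i:ℕ)+1 = m+1 then Yf k x else 0)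
          = (fun (i : Fin (n+1)) (x : K4) => if (i:ℕ) = m then Yf k x else 0) from by
        funext i x; simp]
      rw [piM_sing, piM_sing, sum_Xf_smul, sum_Yf_smul, hAv_tg k n V BV hV m,
        hAv_sg k n V BV hV m]
      have : ∀ u w z : V, u + (u + z) + (w + (w + z)) = (u+u) + (w+w) + (z+z) := by
        intros; abel
      rw [this]; simp [h2]
  | inr j =>
    obtain ⟨m, hm⟩ := j
    rw [show valsF k n (Sum.inr ⟨m, hm⟩)
        = (fun (i : Fin (n+1)) (x : K4) => if (i:ℕ) = m then (fun _ => (1:k)) x else 0) from rfl, piM_sing]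
    rw [sum_K4]
    simp only [one_smul, one_mul]
    rw [mul_smul, hAv_tg k n V BV hV m, smul_add, hBv_sg k n V BV hV m]
    have : ∀ u w z : V, u + w + (u + z) + (w + z) = (u+u) + (w+w) + (z+z) := by
      intros; abel
    rw [this]; simp [h2]

end rel

section ws
variable (W : Type) [AddCommGroup W] [Module k W] [DistribMulAction K4 W] [SMulCommClass K4 k W]
  (BW : Module.Basis (Fin (n+2) ⊕ Fin (n+1)) k W)

noncomputable def rhoM : (Fin (n+1) → K4 → k) →ₗ[k] W where
  toFun F := (∑ i : Fin (n+1), (F i sg + F i (sg*tg)) • BW (Sum.inl i.castSucc))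
    + (F (Fin.last n) tg + F (Fin.last n) (sg*tg)) • BW (Sum.inl (Fin.last (n+1)))
    + ∑ i : Fin (n+1), (F i (sg*tg)) • BW (Sum.inr i)
  map_add' F G := by
    simp only [Pi.add_apply, add_smul, Finset.sum_add_distrib]
    abel
  map_smul' c F := by
    simp only [Pi.smul_apply, smul_eq_mul, RingHom.id_apply, ← mul_add, mul_smul,
      ← Finset.smul_sum, smul_add]

lemma rhoM_apply (F : Fin (n+1) → K4 → k) :
    rhoM k n W BW F = (∑ i : Fin (n+1), (F i sg + F i (sg*tg)) • BW (Sum.inl i.castSucc))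
    + (F (Fin.last n) tg + F (Fin.last n) (sg*tg)) • BW (Sum.inl (Fin.last (n+1)))
    + ∑ i : Fin (n+1), (F i (sg*tg)) • BW (Sum.inr i) := rfl

@[simp] lemma valsF_inl_sg (j : Fin (n+2)) (i : Fin (n+1)) :
    valsF k n (Sum.inl j) i sg = if (i:ℕ) = (j:ℕ) then 1 else 0 := by
  simp [valsF]

@[simp] lemma valsF_inl_tg (j : Fin (n+2)) (i : Fin (n+1)) :
    valsF k n (Sum.inl j) i tg = if (i:ℕ)+1 = (j:ℕ) then 1 else 0 := by
  simp [valsF]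

@[simp] lemma valsF_inl_st (j : Fin (n+2)) (i : Fin (n+1)) :
    valsF k n (Sum.inl j) i (sg*tg) = 0 := by
  simp [valsF]

@[simp] lemma valsF_inr (j : Fin (n+1)) (i : Fin (n+1)) (x : K4) :
    valsF k n (Sum.inr j) i x = if (i:ℕ) = (j:ℕ) then 1 else 0 := rfl

lemma rho_valsF [CharP k 2] (s : Fin (n+2) ⊕ Fin (n+1)) :
    rhoM k n W BW (valsF k n s) = BW s := by
  cases s with
  | inl j =>
    rw [rhoM_apply]
    induction j using Fin.lastCases with
    | last =>
      have h3 : (∑ i : Fin (n+1), (valsF k n (Sum.inl (Fin.last (n+1))) i sg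
          + valsF k n (Sum.inl (Fin.last (n+1))) i (sg*tg)) • BW (Sum.inl i.castSucc)) = 0 :=
        Finset.sum_eq_zero fun i _ => by
          have hi : (i:ℕ) ≠ n+1 := by have := i.isLt; omega
          simp [hi]
      have h4 : (∑ i : Fin (n+1),
          valsF k n (Sum.inl (Fin.last (n+1))) i (sg*tg) • BW (Sum.inr i)) = 0 :=
        Finset.sum_eq_zero fun i _ => by simp
      rw [h3, h4]
      simp
    | cast j₀ =>
      have hne : ¬ (n + 1 = (j₀:ℕ)) := by have := j₀.isLt; omega
      simp only [valsF_inl_sg, valsF_inl_tg, valsF_inl_st, Fin.coe_castSucc, Fin.val_last,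
        hne, if_false, add_zero, zero_add, zero_smul, Finset.sum_const_zero]
      have h1 : ∀ i : Fin (n+1), ((if (i:ℕ) = (j₀:ℕ) then (1:k) else 0)) • BW (Sum.inl i.castSucc)
          = if i = j₀ then BW (Sum.inl i.castSucc) else 0 := fun i => by
        rcases eq_or_ne i j₀ with rfl | h
        · simp
        · simp [Fin.val_eq_val, h]
      rw [Finset.sum_congr rfl (fun i _ => h1 i), Finset.sum_ite_eq']
      simp
  | inr j =>
    rw [rhoM_apply]
    simp only [valsF_inr, CharTwo.add_self_eq_zero, zero_smul, Finset.sum_const_zero,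
      zero_add, add_zero]
    have h1 : ∀ i : Fin (n+1), ((if (i:ℕ) = (j:ℕ) then (1:k) else 0)) • BW (Sum.inr i)
        = if i = j then BW (Sum.inr i) else 0 := fun i => by
      rcases eq_or_ne i j with rfl | h
      · simp
      · simp [Fin.val_eq_val, h]
    rw [Finset.sum_congr rfl (fun i _ => h1 i), Finset.sum_ite_eq']
    simp


noncomputable def iotaM : W →ₗ[k] (Fin (n+1) → K4 → k) := BW.constr k (valsF k n)

lemma iotaM_basis (s : Fin (n+2) ⊕ Fin (n+1)) :
    iotaM k n W BW (BW s) = valsF k n s := BW.constr_basis k (valsF k n) s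

noncomputable def shiftL (g : K4) :
    (Fin (n+1) → K4 → k) →ₗ[k] (Fin (n+1) → K4 → k) where
  toFun F := fun i x => F i (g⁻¹ * x)
  map_add' _ _ := rfl
  map_smul' _ _ := rfl

variable [CharP k 2]

lemma iota_sg (hW : IsVpos k (n+1) W BW) (w : W) :
    iotaM k n W BW (sg • w) = shiftL k n sg (iotaM k n W BW w) := by
  have hcomm : iotaM k n W BW ∘ₗ DistribMulAction.toLinearMap k W sg
      = shiftL k n sg ∘ₗ iotaM k n W BW := by
    refine BW.ext fun s => ?_
    show iotaM k n W BW (sg • BW s) = shiftL k n sg (iotaM k n W BW (BW s))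
    rw [iotaM_basis]
    have hinv : sg⁻¹ = sg := by decide
    cases s with
    | inr j =>
      rw [hW.2.2.2.2.1 j, iotaM_basis]
      rfl
    | inl j =>
      induction j using Fin.cases with
      | zero =>
        rw [hW.1, iotaM_basis]
        funext i x
        show valsF k n (Sum.inl 0) i x = valsF k n (Sum.inl 0) i (sg⁻¹ * x)
        rw [hinv]
        simp [valsF, Xf_mul_sg]
      | succ i₀ =>
        rw [hW.2.1 i₀, map_add, iotaM_basis, iotaM_basis]
        funext i x
        show valsF k n (Sum.inl i₀.succ) i x + valsF k n (Sum.inr i₀) i x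
          = valsF k n (Sum.inl i₀.succ) i (sg⁻¹ * x)
        rw [hinv]
        by_cases hc1 : (i:ℕ) = (i₀:ℕ)
        · have hc2 : ¬ ((i:ℕ) = (i₀:ℕ)+1) := by omega
          simp [valsF, Fin.val_succ, hc1, hc2, Yf_mul_sg]
        · by_cases hc2 : (i:ℕ) = (i₀:ℕ)+1
          · simp [valsF, Fin.val_succ, hc1, hc2, Xf_mul_sg]
          · simp [valsF, Fin.val_succ, hc1, hc2]
  exact LinearMap.congr_fun hcomm w

lemma iota_tg (hW : IsVpos k (n+1) W BW) (w : W) :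
    iotaM k n W BW (tg • w) = shiftL k n tg (iotaM k n W BW w) := by
  have hcomm : iotaM k n W BW ∘ₗ DistribMulAction.toLinearMap k W tg
      = shiftL k n tg ∘ₗ iotaM k n W BW := by
    refine BW.ext fun s => ?_
    show iotaM k n W BW (tg • BW s) = shiftL k n tg (iotaM k n W BW (BW s))
    rw [iotaM_basis]
    have hinv : tg⁻¹ = tg := by decide
    cases s with
    | inr j =>
      rw [hW.2.2.2.2.2 j, iotaM_basis]
      rfl
    | inl j =>
      induction j using Fin.lastCases with
      | last =>
        rw [hW.2.2.2.1, iotaM_basis]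
        funext i x
        show valsF k n (Sum.inl (Fin.last (n+1))) i x
          = valsF k n (Sum.inl (Fin.last (n+1))) i (tg⁻¹ * x)
        rw [hinv]
        have hc2 : ¬ ((i:ℕ) = n+1) := by have := i.isLt; omega
        by_cases hc1 : (i:ℕ)+1 = n+1 <;>
          simp [valsF, Fin.val_last, hc1, hc2, Yf_mul_tg]
      | cast j₀ =>
        rw [hW.2.2.1 j₀, map_add, iotaM_basis, iotaM_basis]
        funext i x
        show valsF k n (Sum.inl j₀.castSucc) i x + valsF k n (Sum.inr j₀) i x
          = valsF k n (Sum.inl j₀.castSucc) i (tg⁻¹ * x)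
        rw [hinv]
        by_cases hc2 : (i:ℕ) = (j₀:ℕ)
        · have hc1 : ¬ ((i:ℕ)+1 = (j₀:ℕ)) := by omega
          simp [valsF, Fin.coe_castSucc, hc1, hc2, Xf_mul_tg]
        · by_cases hc1 : (i:ℕ)+1 = (j₀:ℕ)
          · simp [valsF, Fin.coe_castSucc, hc1, hc2, Yf_mul_tg]
          · simp [valsF, Fin.coe_castSucc, hc1, hc2]
  exact LinearMap.congr_fun hcomm w

lemma iota_equiv (hW : IsVpos k (n+1) W BW) (g : K4) (w : W) :
    iotaM k n W BW (g • w) = fun i x => iotaM k n W BW w i (g⁻¹ * x) := by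
  have hs := iota_sg k n W BW hW
  have ht := iota_tg k n W BW hW
  rcases K4cases g with rfl | rfl | rfl | rfl
  · simp only [one_smul, inv_one, one_mul]
  · exact hs w
  · exact ht w
  · rw [mul_smul, hs, ht]
    funext i x
    show iotaM k n W BW w i (tg⁻¹ * (sg⁻¹ * x)) = _
    rw [← mul_assoc, ← mul_inv_rev]

end ws
end aux

/-- For every `n ≥ 0` there is a surjective `kG`-homomorphism from the free module
`(kG)^{n+1}` onto `V_{2n+1}` whose kernel is isomorphic as a `kG`-module to `V_{2n+3}`
(= `V_{2(n+1)+1}`, realized by `W` via an injective equivariant map with range `ker π`).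
The free module is realized as `Fin (n+1) → (K4 → k)` with the left regular action
`(g • F) i x = F i (g⁻¹x)`. -/
theorem stmt16 (k : Type) [Field k] [CharP k 2] (n : ℕ)
    (V : Type) [AddCommGroup V] [Module k V] [DistribMulAction K4 V] [SMulCommClass K4 k V]
    (BV : Module.Basis (Fin (n + 1) ⊕ Fin n) k V) (hV : IsVpos k n V BV)
    (W : Type) [AddCommGroup W] [Module k W] [DistribMulAction K4 W] [SMulCommClass K4 k W]
    (BW : Module.Basis (Fin (n + 2) ⊕ Fin (n + 1)) k W) (hW : IsVpos k (n + 1) W BW) :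
    ∃ π : (Fin (n + 1) → K4 → k) →ₗ[k] V,
      Function.Surjective π ∧
      (∀ (g : K4) (F : Fin (n + 1) → K4 → k),
        π (fun i x => F i (g⁻¹ * x)) = g • π F) ∧
      ∃ ι : W →ₗ[k] (Fin (n + 1) → K4 → k),
        Function.Injective ι ∧
        (∀ (g : K4) (w : W), ι (g • w) = fun i x => ι w i (g⁻¹ * x)) ∧
        LinearMap.range ι = LinearMap.ker π := by
  have hinj : Function.Injective (iotaM k n W BW) := by
    have hid : rhoM k n W BW ∘ₗ iotaM k n W BW = LinearMap.id := by
      refine BW.ext fun s => ?_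
      show rhoM k n W BW (iotaM k n W BW (BW s)) = BW s
      rw [iotaM_basis, rho_valsF]
    exact Function.LeftInverse.injective (g := rhoM k n W BW)
      (fun w => LinearMap.congr_fun hid w)
  refine ⟨piM k n V BV, piM_surj k n V BV hV, fun g F => piM_equiv k n V BV g F,
    iotaM k n W BW, hinj, iota_equiv k n W BW hW, ?_⟩
  have hle : LinearMap.range (iotaM k n W BW) ≤ LinearMap.ker (piM k n V BV) := by
    rintro _ ⟨w, rfl⟩
    rw [LinearMap.mem_ker]
    have hcomp : piM k n V BV ∘ₗ iotaM k n W BW = 0 := by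
      refine BW.ext fun s => ?_
      show piM k n V BV (iotaM k n W BW (BW s)) = 0
      rw [iotaM_basis]
      exact piM_valsF k n V BV hV s
    exact LinearMap.congr_fun hcomp w
  haveI : FiniteDimensional k V := Module.Finite.of_basis BV
  haveI : FiniteDimensional k W := Module.Finite.of_basis BW
  have hVd : Module.finrank k V = 2*n+1 := by
    rw [Module.finrank_eq_card_basis BV]
    simp [Fintype.card_sum]
    omega
  have hWd : Module.finrank k W = 2*n+3 := by
    rw [Module.finrank_eq_card_basis BW]
    simp [Fintype.card_sum]
    omega
  have hMd : Module.finrank k (Fin (n+1) → K4 → k) = 4*(n+1) := by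
    rw [Module.finrank_pi_fintype]
    have : Module.finrank k (K4 → k) = 4 := by
      rw [Module.finrank_pi]
      decide
    simp [this]
    ring
  have hker : Module.finrank k (LinearMap.ker (piM k n V BV)) = 2*n+3 := by
    have h := LinearMap.finrank_range_add_finrank_ker (piM k n V BV)
    rw [LinearMap.range_eq_top.mpr (piM_surj k n V BV hV), finrank_top, hMd, hVd] at h
    omega
  have hrange : Module.finrank k (LinearMap.range (iotaM k n W BW)) = 2*n+3 := by
    rw [LinearMap.finrank_range_of_inj hinj, hWd]
  exact Submodule.eq_of_le_of_finrank_eq hle (by rw [hrange, hker])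
end

section
/- For every n ≥ 0 there exists an injective kG-module homomorphism from V_{−(2n+1)} into the free module (kG)^{n+1} whose cokernel is isomorphic as a kG-module to V_{−(2n+3)}. -/
set_option linter.unusedSectionVars false
set_option linter.unusedVariables false


/-- `V` carries the structure of the module `V_{-(2n+1)}`: the basis vector `B (Sum.inl i)`
is `a_{i+1}` (for `0 ≤ i ≤ n-1`) and `B (Sum.inr j)` is `b_j` (for `0 ≤ j ≤ n`), with
`X·aᵢ = b_{i-1}`, `Y·aᵢ = bᵢ`, `X·bⱼ = Y·bⱼ = 0`, i.e. (with `σ = 1 + X`, `τ = 1 + Y`)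
`σ·aᵢ = aᵢ + b_{i-1}`, `τ·aᵢ = aᵢ + bᵢ`, and `σ, τ` fix the `bⱼ`. -/
def IsVneg (k : Type) [Field k] (n : ℕ) (V : Type) [AddCommGroup V] [Module k V]
    [DistribMulAction K4 V] (B : Module.Basis (Fin n ⊕ Fin (n + 1)) k V) : Prop :=
  (∀ i : Fin n, sg • B (Sum.inl i) = B (Sum.inl i) + B (Sum.inr i.castSucc)) ∧
  (∀ i : Fin n, tg • B (Sum.inl i) = B (Sum.inl i) + B (Sum.inr i.succ)) ∧
  (∀ j : Fin (n + 1), sg • B (Sum.inr j) = B (Sum.inr j)) ∧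
  (∀ j : Fin (n + 1), tg • B (Sum.inr j) = B (Sum.inr j))

section Aux

lemma k4cases : ∀ g : K4, g = 1 ∨ g = sg ∨ g = tg ∨ g = sg * tg := by decide

lemma K4sum {M : Type*} [AddCommMonoid M] (f : K4 → M) :
    ∑ g : K4, f g = f 1 + f sg + f tg + f (sg * tg) := by
  rw [show (Finset.univ : Finset K4) = {1, sg, tg, sg * tg} from by decide,
    Finset.sum_insert (by decide), Finset.sum_insert (by decide),
    Finset.sum_insert (by decide), Finset.sum_singleton]
  abel

variable (k : Type) [Field k] [CharP k 2]

def Xfun : K4 → k := fun x => if x = 1 ∨ x = sg then 1 else 0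
def Yfun : K4 → k := fun x => if x = 1 ∨ x = tg then 1 else 0
def XYfun : K4 → k := fun _ => 1

@[simp] lemma Xfun_one : Xfun k 1 = 1 := if_pos (by decide)
@[simp] lemma Xfun_sgv : Xfun k sg = 1 := if_pos (by decide)
@[simp] lemma Xfun_tgv : Xfun k tg = 0 := if_neg (by decide)
@[simp] lemma Xfun_stv : Xfun k (sg * tg) = 0 := if_neg (by decide)
@[simp] lemma Yfun_one : Yfun k 1 = 1 := if_pos (by decide)
@[simp] lemma Yfun_sgv : Yfun k sg = 0 := if_neg (by decide)
@[simp] lemma Yfun_tgv : Yfun k tg = 1 := if_pos (by decide)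
@[simp] lemma Yfun_stv : Yfun k (sg * tg) = 0 := if_neg (by decide)
@[simp] lemma XYfun_apply (x : K4) : XYfun k x = 1 := rfl

lemma Yfun_sg (x : K4) : Yfun k (sg⁻¹ * x) = Yfun k x + XYfun k x := by
  rcases k4cases x with rfl | rfl | rfl | rfl <;>
    simp (config := { decide := true }) [Xfun, Yfun, XYfun, CharTwo.add_self_eq_zero]

lemma Xfun_sg (x : K4) : Xfun k (sg⁻¹ * x) = Xfun k x := by
  rcases k4cases x with rfl | rfl | rfl | rfl <;>
    simp (config := { decide := true }) [Xfun, Yfun, XYfun]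

lemma Xfun_tg (x : K4) : Xfun k (tg⁻¹ * x) = Xfun k x + XYfun k x := by
  rcases k4cases x with rfl | rfl | rfl | rfl <;>
    simp (config := { decide := true }) [Xfun, Yfun, XYfun, CharTwo.add_self_eq_zero]

lemma Yfun_tg (x : K4) : Yfun k (tg⁻¹ * x) = Yfun k x := by
  rcases k4cases x with rfl | rfl | rfl | rfl <;>
    simp (config := { decide := true }) [Xfun, Yfun, XYfun]

/-- The translation action on the free module. -/
def Tmap (n : ℕ) (g : K4) : (Fin (n + 1) → K4 → k) →ₗ[k] (Fin (n + 1) → K4 → k) where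
  toFun F := fun i x => F i (g⁻¹ * x)
  map_add' F G := rfl
  map_smul' c F := rfl

lemma Tmap_apply (n : ℕ) (g : K4) (F : Fin (n + 1) → K4 → k) (i : Fin (n + 1)) (x : K4) :
    Tmap k n g F i x = F i (g⁻¹ * x) := rfl

/-- The images of the basis vectors of `V` under the embedding. -/
def uu (n : ℕ) : (Fin n ⊕ Fin (n + 1)) → (Fin (n + 1) → K4 → k)
  | .inl i => Pi.single i.castSucc (Yfun k) + Pi.single i.succ (Xfun k)
  | .inr j => Pi.single j (XYfun k)

/-- Standard basis of the free module. -/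
noncomputable def Bfree (n : ℕ) : Module.Basis ((_ : Fin (n + 1)) × K4) k (Fin (n + 1) → K4 → k) :=
  Pi.basis fun _ => Pi.basisFun k K4

lemma single_app {n : ℕ} (j i' : Fin (n + 1)) (f : K4 → k) (x : K4) :
    (Pi.single j f : Fin (n + 1) → K4 → k) i' x = if i' = j then f x else 0 := by
  rcases eq_or_ne i' j with rfl | h
  · simp
  · simp [Pi.single_eq_of_ne h, h]

lemma constr_single {n : ℕ} {M : Type*} [AddCommGroup M] [Module k M]
    (f : ((_ : Fin (n + 1)) × K4) → M) (j : Fin (n + 1)) (φ : K4 → k) :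
    ((Bfree k n).constr k f) (Pi.single j φ) = ∑ g : K4, φ g • f ⟨j, g⟩ := by
  classical
  rw [Module.Basis.constr_apply_fintype, ← Finset.univ_sigma_univ, Finset.sum_sigma]
  have h1 : ∀ (i : Fin (n + 1)) (g : K4),
      (Bfree k n).equivFun (Pi.single j φ) ⟨i, g⟩ = if i = j then φ g else 0 := by
    intro i g
    simp only [Module.Basis.equivFun_apply, Bfree, Pi.basis_repr, Pi.basisFun_repr]
    exact single_app k j i φ g
  calc ∑ i : Fin (n + 1), ∑ g : K4,
        (Bfree k n).equivFun (Pi.single j φ) ⟨i, g⟩ • f ⟨i, g⟩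
      = ∑ i : Fin (n + 1), if i = j then ∑ g : K4, φ g • f ⟨i, g⟩ else 0 := by
        refine Finset.sum_congr rfl fun i _ => ?_
        by_cases h : i = j <;> simp [h1, h]
    _ = ∑ g : K4, φ g • f ⟨j, g⟩ := by simp

variable (n : ℕ) (V : Type) [AddCommGroup V] [Module k V]
  (BV : Module.Basis (Fin n ⊕ Fin (n + 1)) k V)

/-- Values defining the retraction `r`. -/
noncomputable def rv (j : Fin (n + 1)) (g : K4) : V :=
  (if g = tg ∨ g = sg * tg then
    (Fin.lastCases 0 (fun i => BV (Sum.inl i)) j) else 0) +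
  (if g = sg * tg then BV (Sum.inr j) else 0)

@[simp] lemma rv_one (j : Fin (n + 1)) : rv k n V BV j 1 = 0 := by
  rw [rv, if_neg (by decide), if_neg (by decide), add_zero]

@[simp] lemma rv_sg (j : Fin (n + 1)) : rv k n V BV j sg = 0 := by
  rw [rv, if_neg (by decide), if_neg (by decide), add_zero]

lemma rv_tg (j : Fin (n + 1)) :
    rv k n V BV j tg = Fin.lastCases 0 (fun i => BV (Sum.inl i)) j := by
  rw [rv, if_pos (by decide), if_neg (by decide), add_zero]

lemma rv_st (j : Fin (n + 1)) :
    rv k n V BV j (sg * tg) =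
      Fin.lastCases 0 (fun i => BV (Sum.inl i)) j + BV (Sum.inr j) := by
  rw [rv, if_pos (by decide), if_pos rfl]

end Aux

/-- For every `n ≥ 0` there is an injective `kG`-homomorphism from `V_{-(2n+1)}` into the
free module `(kG)^{n+1}` whose cokernel is isomorphic as a `kG`-module to `V_{-(2n+3)}`
(= `V_{-(2(n+1)+1)}`, realized by `W` via a surjective equivariant map `p` with
`ker p = range ι`). The free module is realized as `Fin (n+1) → (K4 → k)` with the left
regular action `(g • F) i x = F i (g⁻¹x)`. -/
theorem stmt17 (k : Type) [Field k] [CharP k 2] (n : ℕ)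
    (V : Type) [AddCommGroup V] [Module k V] [DistribMulAction K4 V] [SMulCommClass K4 k V]
    (BV : Module.Basis (Fin n ⊕ Fin (n + 1)) k V) (hV : IsVneg k n V BV)
    (W : Type) [AddCommGroup W] [Module k W] [DistribMulAction K4 W] [SMulCommClass K4 k W]
    (BW : Module.Basis (Fin (n + 1) ⊕ Fin (n + 2)) k W) (hW : IsVneg k (n + 1) W BW) :
    ∃ ι : V →ₗ[k] (Fin (n + 1) → K4 → k),
      Function.Injective ι ∧
      (∀ (g : K4) (v : V), ι (g • v) = fun i x => ι v i (g⁻¹ * x)) ∧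
      ∃ p : (Fin (n + 1) → K4 → k) →ₗ[k] W,
        Function.Surjective p ∧
        (∀ (g : K4) (F : Fin (n + 1) → K4 → k),
          p (fun i x => F i (g⁻¹ * x)) = g • p F) ∧
        LinearMap.ker p = LinearMap.range ι := by
  classical
  obtain ⟨hV1, hV2, hV3, hV4⟩ := hV
  obtain ⟨hW1, hW2, hW3, hW4⟩ := hW
  have hv2 : ∀ v : V, v + v = 0 := fun v => by
    rw [← two_smul k v, show (2 : k) = 0 from CharTwo.two_eq_zero, zero_smul]
  have hw2 : ∀ w : W, w + w = 0 := fun w => by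
    rw [← two_smul k w, show (2 : k) = 0 from CharTwo.two_eq_zero, zero_smul]
  have habs : ∀ a b : W, a + b + a = b := fun a b => by
    rw [add_right_comm, hw2, zero_add]
  set ι : V →ₗ[k] (Fin (n + 1) → K4 → k) := BV.constr k (uu k n) with hιdef
  set p : (Fin (n + 1) → K4 → k) →ₗ[k] W :=
    (Bfree k n).constr k (fun x => x.2 • BW (Sum.inl x.1)) with hpdef
  have hιa : ∀ i : Fin n, ι (BV (Sum.inl i)) =
      Pi.single i.castSucc (Yfun k) + Pi.single i.succ (Xfun k) :=
    fun i => BV.constr_basis k (uu k n) (Sum.inl i)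
  have hιb : ∀ j : Fin (n + 1), ι (BV (Sum.inr j)) = Pi.single j (XYfun k) :=
    fun j => BV.constr_basis k (uu k n) (Sum.inr j)
  have hpb : ∀ x : (_ : Fin (n + 1)) × K4, p ((Bfree k n) x) = x.2 • BW (Sum.inl x.1) :=
    fun x => (Bfree k n).constr_basis k _ x
  have hpsingle : ∀ (j : Fin (n + 1)) (φ : K4 → k),
      p (Pi.single j φ) = ∑ g : K4, φ g • (g • BW (Sum.inl j)) :=
    fun j φ => constr_single k _ j φ
  have hWst : ∀ i : Fin (n + 1), (sg * tg) • BW (Sum.inl i) =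
      BW (Sum.inl i) + BW (Sum.inr i.castSucc) + BW (Sum.inr i.succ) := by
    intro i
    rw [mul_smul, hW2 i, smul_add, hW1 i, hW3]
  -- the retraction r giving injectivity
  set r : (Fin (n + 1) → K4 → k) →ₗ[k] V :=
    (Bfree k n).constr k (fun x => rv k n V BV x.1 x.2) with hrdef
  have hrsingle : ∀ (j : Fin (n + 1)) (φ : K4 → k),
      r (Pi.single j φ) = ∑ g : K4, φ g • rv k n V BV j g :=
    fun j φ => constr_single k _ j φ
  have hrι : ∀ b, r (ι (BV b)) = BV b := by
    rintro (i | j)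
    · rw [hιa i, map_add, hrsingle, hrsingle, K4sum, K4sum]
      simp [rv_tg, Fin.lastCases_castSucc]
    · rw [hιb j, hrsingle, K4sum]
      simp only [XYfun_apply, one_smul, rv_one, rv_sg, rv_tg, rv_st, zero_add]
      rw [← add_assoc, hv2, zero_add]
  have hcomp : r ∘ₗ ι = LinearMap.id := BV.ext fun b => hrι b
  have hinj : Function.Injective ι :=
    Function.LeftInverse.injective (g := r) fun v => by
      simpa using LinearMap.congr_fun hcomp v
  -- equivariance of ι
  have hTsg : ι ∘ₗ DistribSMul.toLinearMap k V sg = Tmap k n sg ∘ₗ ι := by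
    refine BV.ext fun b => ?_
    rcases b with i | j
    · simp only [LinearMap.comp_apply, DistribSMul.toLinearMap_apply]
      rw [hV1 i, map_add, hιa, hιb]
      funext i' x
      simp only [Pi.add_apply, Tmap_apply, single_app, Yfun_sg, Xfun_sg]
      split_ifs <;> abel
    · simp only [LinearMap.comp_apply, DistribSMul.toLinearMap_apply]
      rw [hV3 j, hιb]
      funext i' x
      simp only [Tmap_apply, single_app, XYfun_apply]
  have hTtg : ι ∘ₗ DistribSMul.toLinearMap k V tg = Tmap k n tg ∘ₗ ι := by
    refine BV.ext fun b => ?_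
    rcases b with i | j
    · simp only [LinearMap.comp_apply, DistribSMul.toLinearMap_apply]
      rw [hV2 i, map_add, hιa, hιb]
      funext i' x
      simp only [Pi.add_apply, Tmap_apply, single_app, Yfun_tg, Xfun_tg]
      split_ifs <;> abel
    · simp only [LinearMap.comp_apply, DistribSMul.toLinearMap_apply]
      rw [hV4 j, hιb]
      funext i' x
      simp only [Tmap_apply, single_app, XYfun_apply]
  have hequiv : ∀ (g : K4) (v : V), ι (g • v) = Tmap k n g (ι v) := by
    have h1 : ∀ v, ι (sg • v) = Tmap k n sg (ι v) := fun v => LinearMap.congr_fun hTsg v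
    have h2 : ∀ v, ι (tg • v) = Tmap k n tg (ι v) := fun v => LinearMap.congr_fun hTtg v
    intro g v
    rcases k4cases g with rfl | rfl | rfl | rfl
    · rw [one_smul]
      funext i x
      rw [Tmap_apply, inv_one, one_mul]
    · exact h1 v
    · exact h2 v
    · rw [mul_smul, h1, h2]
      funext i x
      rw [Tmap_apply, Tmap_apply, Tmap_apply, mul_inv_rev, mul_assoc]
  -- equivariance of p
  have hTfree : ∀ (g : K4) (x : (_ : Fin (n + 1)) × K4),
      Tmap k n g ((Bfree k n) x) = (Bfree k n) ⟨x.1, g * x.2⟩ := by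
    rintro g ⟨i, h⟩
    funext i' x
    simp only [Bfree, Pi.basis_apply, Pi.basisFun_apply, Tmap_apply, single_app,
      Pi.single_apply, inv_mul_eq_iff_eq_mul]
  have hpg : ∀ g : K4, p ∘ₗ Tmap k n g = DistribSMul.toLinearMap k W g ∘ₗ p := by
    intro g
    refine (Bfree k n).ext fun x => ?_
    simp only [LinearMap.comp_apply, hTfree, hpb, DistribSMul.toLinearMap_apply]
    rw [mul_smul]
  -- surjectivity of p
  have hsurj : Function.Surjective p := by
    rw [← LinearMap.range_eq_top, ← top_le_iff, ← BW.span_eq, Submodule.span_le]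
    rintro w ⟨b, rfl⟩
    rcases b with i | j
    · exact ⟨(Bfree k n) ⟨i, 1⟩, by rw [hpb]; exact one_smul _ _⟩
    · induction j using Fin.lastCases with
      | last =>
          refine ⟨(Bfree k n) ⟨Fin.last n, tg⟩ + (Bfree k n) ⟨Fin.last n, 1⟩, ?_⟩
          rw [map_add, hpb, hpb]
          simp only [one_smul]
          rw [hW2, Fin.succ_last]
          exact habs _ _
      | cast i =>
          refine ⟨(Bfree k n) ⟨i, sg⟩ + (Bfree k n) ⟨i, 1⟩, ?_⟩
          rw [map_add, hpb, hpb]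
          simp only [one_smul]
          rw [hW1]
          exact habs _ _
  -- range ι ≤ ker p
  have hker : p ∘ₗ ι = 0 := by
    refine BV.ext fun b => ?_
    rcases b with i | j
    · simp only [LinearMap.comp_apply, LinearMap.zero_apply]
      rw [hιa, map_add, hpsingle, hpsingle, K4sum, K4sum]
      simp only [Xfun_one, Xfun_sgv, Xfun_tgv, Xfun_stv, Yfun_one, Yfun_sgv,
        Yfun_tgv, Yfun_stv, one_smul, zero_smul, add_zero, zero_add]
      rw [hW2 i.castSucc, hW1 i.succ, Fin.succ_castSucc]
      have h0 : ((BW (Sum.inl i.castSucc) + BW (Sum.inl i.castSucc)) +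
          (BW (Sum.inl i.succ) + BW (Sum.inl i.succ))) +
          (BW (Sum.inr i.succ.castSucc) + BW (Sum.inr i.succ.castSucc)) = (0 : W) := by
        simp [hw2]
      rw [← h0]; abel
    · simp only [LinearMap.comp_apply, LinearMap.zero_apply]
      rw [hιb, hpsingle, K4sum]
      simp only [XYfun_apply, one_smul]
      rw [hW1 j, hW2 j, hWst j]
      have h0 : ((BW (Sum.inl j) + BW (Sum.inl j)) + (BW (Sum.inl j) + BW (Sum.inl j))) +
          ((BW (Sum.inr j.castSucc) + BW (Sum.inr j.castSucc)) +
           (BW (Sum.inr j.succ) + BW (Sum.inr j.succ))) = (0 : W) := by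
        simp [hw2]
      rw [← h0]; abel
  have hle : LinearMap.range ι ≤ LinearMap.ker p := LinearMap.range_le_ker_iff.mpr hker
  -- dimension count
  haveI : Module.Finite k V := Module.Finite.of_basis BV
  haveI : Module.Finite k W := Module.Finite.of_basis BW
  have hdimV : Module.finrank k V = 2 * n + 1 := by
    rw [Module.finrank_eq_card_basis BV]
    simp; omega
  have hdimW : Module.finrank k W = 2 * n + 3 := by
    rw [Module.finrank_eq_card_basis BW]
    simp; omega
  have hdimF : Module.finrank k (Fin (n + 1) → K4 → k) = 4 * n + 4 := by
    rw [Module.finrank_eq_card_basis (Bfree k n)]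
    simp [Fintype.card_sigma, show Fintype.card K4 = 4 from rfl]
    omega
  have h1 : Module.finrank k (LinearMap.range ι) = 2 * n + 1 := by
    rw [LinearMap.finrank_range_of_inj hinj, hdimV]
  have h2 : Module.finrank k (LinearMap.ker p) = 2 * n + 1 := by
    have h3 := LinearMap.finrank_range_add_finrank_ker p
    rw [LinearMap.range_eq_top.mpr hsurj, finrank_top, hdimW, hdimF] at h3
    omega
  have hkerrange : LinearMap.ker p = LinearMap.range ι :=
    (Submodule.eq_of_le_of_finrank_le hle (by rw [h1, h2])).symm
  exact ⟨ι, hinj, fun g v => hequiv g v, p, hsurj,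
    fun g F => LinearMap.congr_fun (hpg g) F, hkerrange⟩
end
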